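/- Let X be the Jacobi matrix of the quantum harmonic oscillator, i.e. of the Jacobi sequence ω n = n + 1 and α n = 0 (so X e_n = √(n+1)·e_{n+1} + √n·e_{n−1}). Then for every natural number m, the normalized moments converge to the moments of the arcsine law: lim_{k→∞} ⟨X^m e_k, e_k⟩ / (2k+1)^{m/2} = ∫_{−√2}^{√2} x^m/(π√(2−x²)) dx. -/

import Mathlib

open Filter


def pathCount : ℕ → ℤ → ℕ
  | 0, d => if d = 0 then 1 else 0
  | m + 1, d => pathCount m (d - 1) + pathCount m (d + 1)

lemma pathCount_eq_zero : ∀ (m : ℕ) (d : ℤ), (m : ℤ) < |d| → pathCount m d = 0 := by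
  intro m
  induction m with
  | zero => intro d h; simp only [pathCount]; rw [if_neg]; intro h'; subst h'; simp at h
  | succ m ih =>
    intro d h
    rw [lt_abs] at h
    simp only [pathCount]
    rw [ih (d - 1) ?_, ih (d + 1) ?_] <;> rw [lt_abs] <;> push_cast at h ⊢ <;> omega

lemma pathCount_odd : ∀ (m : ℕ) (d : ℤ), Odd ((m : ℤ) + d) → pathCount m d = 0 := by
  intro m
  induction m with
  | zero =>
    intro d h; simp only [pathCount]; rw [if_neg]; rintro rfl; simp at h
  | succ m ih =>
    intro d h
    simp only [pathCount]
    rw [ih (d - 1) ?_, ih (d + 1) ?_]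
    · push_cast at h ⊢; exact ⟨h.choose, by have := h.choose_spec; omega⟩
    · push_cast at h ⊢; exact ⟨h.choose - 1, by have := h.choose_spec; omega⟩

lemma pathCount_choose : ∀ (m t : ℕ), t ≤ m → pathCount m (2 * (t : ℤ) - m) = m.choose t := by
  intro m
  induction m with
  | zero => intro t ht; interval_cases t; simp [pathCount]
  | succ m ih =>
    intro t ht
    simp only [pathCount]
    rcases Nat.eq_zero_or_pos t with rfl | htpos
    · have h0 : (2 * ((0:ℕ) : ℤ) - (m+1:ℕ)) - 1 = 2 * ((0:ℕ):ℤ) - m - 2 := by push_cast; ring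
      rw [h0]
      rw [pathCount_eq_zero m _ (by rw [lt_abs]; push_cast; omega)]
      have h1 : (2 * ((0:ℕ) : ℤ) - (m+1:ℕ)) + 1 = 2 * ((0:ℕ):ℤ) - m := by push_cast; ring
      rw [h1, ih 0 (Nat.zero_le _)]
      simp
    rcases Nat.lt_or_ge t (m+1) with hlt | hge
    · have h0 : (2 * (t : ℤ) - (m+1:ℕ)) - 1 = 2 * ((t-1:ℕ):ℤ) - m := by push_cast; omega
      have h1 : (2 * (t : ℤ) - (m+1:ℕ)) + 1 = 2 * ((t:ℕ):ℤ) - m := by push_cast; ring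
      rw [h0, h1, ih (t-1) (by omega), ih t (by omega)]
      obtain ⟨s, rfl⟩ := Nat.exists_eq_succ_of_ne_zero (Nat.pos_iff_ne_zero.mp htpos)
      simp only [Nat.succ_sub_one]
      exact (Nat.choose_succ_succ' m s).symm
    · -- t = m+1
      have hteq : t = m + 1 := le_antisymm ht hge
      subst hteq
      have h0 : (2 * ((m+1:ℕ) : ℤ) - (m+1:ℕ)) - 1 = 2 * ((m:ℕ):ℤ) - m := by push_cast; ring
      have h1 : (2 * ((m+1:ℕ) : ℤ) - (m+1:ℕ)) + 1 = ((m:ℤ) + 2) := by push_cast; ring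
      rw [h0, h1, ih m le_rfl]
      rw [pathCount_eq_zero m _ (by rw [lt_abs]; push_cast; omega)]
      simp [Nat.choose_self]


lemma pathCount_def0 (d : ℤ) : pathCount 0 d = if d = 0 then 1 else 0 := rfl

lemma pathCount_defS (m : ℕ) (d : ℤ) :
    pathCount (m + 1) d = pathCount m (d - 1) + pathCount m (d + 1) := rfl

/-- The Jacobi matrix of a Jacobi sequence `(ω, α)`, acting on finitely supported
real sequences indexed by `ℕ`:
`X e_n = √(ω n)·e_{n+1} + α n·e_n + √(ω (n-1))·e_{n-1}`, last term omitted for `n = 0`. -/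
noncomputable def jacobiOp (ω α : ℕ → ℝ) : (ℕ →₀ ℝ) →ₗ[ℝ] (ℕ →₀ ℝ) :=
  Finsupp.lsum ℝ fun n => LinearMap.toSpanSingleton ℝ (ℕ →₀ ℝ)
    (Real.sqrt (ω n) • Finsupp.single (n + 1) 1 + α n • Finsupp.single n 1 +
      if n = 0 then 0 else Real.sqrt (ω (n - 1)) • Finsupp.single (n - 1) 1)

lemma jacobiOp_apply (v : ℕ →₀ ℝ) (j : ℕ) :
    (jacobiOp (fun n => (n : ℝ) + 1) (fun _ => 0) v) j
      = Real.sqrt j * v (j - 1) + Real.sqrt ((j : ℝ) + 1) * v (j + 1) := by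
  induction v using Finsupp.induction_linear with
  | zero => simp
  | add f g hf hg =>
    rw [map_add, Finsupp.add_apply, hf, hg, Finsupp.add_apply, Finsupp.add_apply]
    ring
  | single n b =>
    have h : (jacobiOp (fun n => (n : ℝ) + 1) (fun _ => 0) (Finsupp.single n b))
        = b • (Real.sqrt ((n : ℝ) + 1) • Finsupp.single (n + 1) 1 +
          (0:ℝ) • Finsupp.single n 1 +
          if n = 0 then 0 else Real.sqrt (((n - 1 : ℕ) : ℝ) + 1) • Finsupp.single (n - 1) 1) := by
      rw [jacobiOp, Finsupp.lsum_single]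
      rfl
    rw [h]
    rcases Nat.eq_zero_or_pos n with rfl | hn
    · simp [Finsupp.single_apply]
      rcases Nat.eq_zero_or_pos j with rfl | hj
      · simp
      · rcases Nat.lt_or_ge j 2 with hj2 | hj2
        · interval_cases j <;> simp
        · rw [if_neg (by omega), if_neg (by omega)]
          first
            | simp [Real.sqrt_eq_zero']
            | skip
    · simp only [Finsupp.smul_apply, Finsupp.coe_add, Pi.add_apply,
        if_neg (Nat.pos_iff_ne_zero.mp hn), Finsupp.single_apply, zero_smul, smul_eq_mul,
        Finsupp.coe_zero, Pi.zero_apply, mul_zero, add_zero, mul_one, zero_add]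
      have hcast : (((n - 1 : ℕ) : ℝ) + 1) = (n : ℝ) := by
        have : ((n - 1 : ℕ) : ℝ) = (n : ℝ) - 1 := by push_cast [hn]; ring
        rw [this]; ring
      rw [hcast]
      split_ifs <;>
        first
          | (exfalso; omega)
          | (have hj : j = n + 1 := (by omega); subst hj; push_cast; ring_nf)
          | (have hj : n = j + 1 := (by omega); subst hj; push_cast; ring_nf)
          | (push_cast; ring)

lemma jacobi_bound (M k : ℕ) (hk : M ≤ k) :
    ∀ m : ℕ, m ≤ M → ∀ j : ℕ,
      (pathCount m ((j : ℤ) - k) : ℝ) * Real.sqrt ((k : ℝ) - M) ^ m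
          ≤ ((jacobiOp (fun n => (n : ℝ) + 1) (fun _ => 0) ^ m) (Finsupp.single k 1)) j
      ∧ ((jacobiOp (fun n => (n : ℝ) + 1) (fun _ => 0) ^ m) (Finsupp.single k 1)) j
          ≤ (pathCount m ((j : ℤ) - k) : ℝ) * Real.sqrt ((k : ℝ) + M + 1) ^ m := by
  set X := jacobiOp (fun n => (n : ℝ) + 1) (fun _ => 0) with hX
  set A := Real.sqrt ((k : ℝ) - M) with hA
  set B := Real.sqrt ((k : ℝ) + M + 1) with hB
  have hA0 : 0 ≤ A := Real.sqrt_nonneg _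
  have hB0 : 0 ≤ B := Real.sqrt_nonneg _
  intro m
  induction m with
  | zero =>
    intro _ j
    simp only [pow_zero, Module.End.one_apply, pathCount_def0]
    rcases eq_or_ne j k with rfl | hne
    · simp [Finsupp.single_apply]
    · rw [if_neg (by omega), Finsupp.single_apply, if_neg (Ne.symm hne)]
      simp
  | succ m ih =>
    intro hm j
    have hmM : m ≤ M := le_trans (Nat.le_succ m) hm
    have IH := ih hmM
    have Fpos : ∀ j' : ℕ, 0 ≤ ((X ^ m) (Finsupp.single k 1)) j' := fun j' =>
      le_trans (by positivity) (IH j').1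
    have hrec : ((X ^ (m+1)) (Finsupp.single k 1)) j
        = Real.sqrt j * ((X ^ m) (Finsupp.single k 1)) (j - 1)
          + Real.sqrt ((j : ℝ) + 1) * ((X ^ m) (Finsupp.single k 1)) (j + 1) := by
      rw [pow_succ', Module.End.mul_apply, hX, jacobiOp_apply]
    rw [hrec, pathCount_defS]
    push_cast
    constructor
    · rw [add_mul, pow_succ]
      apply add_le_add
      · -- lower bound for down term
        by_cases hc : pathCount m ((j : ℤ) - k - 1) = 0
        · rw [hc]
          push_cast
          simpa using mul_nonneg (Real.sqrt_nonneg _) (Fpos (j - 1))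
        · have habs : ¬ ((m : ℤ) < |(j : ℤ) - k - 1|) := fun h => hc (pathCount_eq_zero _ _ h)
          rw [lt_abs, not_or] at habs
          obtain ⟨ha1, ha2⟩ := habs
          rw [not_lt] at ha1 ha2
          have hlow := (IH (j - 1)).1
          rw [show ((j - 1 : ℕ) : ℤ) - (k : ℤ) = (j : ℤ) - k - 1 by omega] at hlow
          have hAj : A ≤ Real.sqrt j := by
            apply Real.sqrt_le_sqrt
            have : (k : ℤ) - M ≤ (j : ℤ) := by omega
            exact_mod_cast this
          calc (pathCount m ((j : ℤ) - k - 1) : ℝ) * (A ^ m * A)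
              = ((pathCount m ((j : ℤ) - k - 1) : ℝ) * A ^ m) * A := by ring
            _ ≤ ((X ^ m) (Finsupp.single k 1)) (j - 1) * Real.sqrt j :=
                mul_le_mul hlow hAj hA0 (Fpos _)
            _ = Real.sqrt j * ((X ^ m) (Finsupp.single k 1)) (j - 1) := mul_comm _ _
      · -- lower bound for up term
        by_cases hc : pathCount m ((j : ℤ) - k + 1) = 0
        · rw [hc]
          push_cast
          simpa using mul_nonneg (Real.sqrt_nonneg _) (Fpos (j + 1))
        · have habs : ¬ ((m : ℤ) < |(j : ℤ) - k + 1|) := fun h => hc (pathCount_eq_zero _ _ h)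
          rw [lt_abs, not_or] at habs
          obtain ⟨ha1, ha2⟩ := habs
          rw [not_lt] at ha1 ha2
          have hlow := (IH (j + 1)).1
          rw [show ((j + 1 : ℕ) : ℤ) - (k : ℤ) = (j : ℤ) - k + 1 by omega] at hlow
          have hAj : A ≤ Real.sqrt ((j : ℝ) + 1) := by
            apply Real.sqrt_le_sqrt
            have : (k : ℤ) - M ≤ (j : ℤ) + 1 := by omega
            exact_mod_cast this
          calc (pathCount m ((j : ℤ) - k + 1) : ℝ) * (A ^ m * A)
              = ((pathCount m ((j : ℤ) - k + 1) : ℝ) * A ^ m) * A := by ring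
            _ ≤ ((X ^ m) (Finsupp.single k 1)) (j + 1) * Real.sqrt ((j : ℝ) + 1) :=
                mul_le_mul hlow hAj hA0 (Fpos _)
            _ = Real.sqrt ((j : ℝ) + 1) * ((X ^ m) (Finsupp.single k 1)) (j + 1) := mul_comm _ _
    · rw [add_mul, pow_succ]
      apply add_le_add
      · -- upper bound for down term
        rcases Nat.eq_zero_or_pos j with rfl | hj1
        · simp only [Nat.cast_zero, Real.sqrt_zero, zero_mul]
          positivity
        · by_cases hc : pathCount m ((j : ℤ) - k - 1) = 0
          · have hforce := (IH (j - 1)).2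
            rw [show ((j - 1 : ℕ) : ℤ) - (k : ℤ) = (j : ℤ) - k - 1 by omega, hc] at hforce
            have h0 : ((X ^ m) (Finsupp.single k 1)) (j - 1) = 0 :=
              le_antisymm (by simpa using hforce) (Fpos _)
            rw [h0, mul_zero]
            positivity
          · have habs : ¬ ((m : ℤ) < |(j : ℤ) - k - 1|) := fun h => hc (pathCount_eq_zero _ _ h)
            rw [lt_abs, not_or] at habs
            obtain ⟨ha1, ha2⟩ := habs
            rw [not_lt] at ha1 ha2
            have hup := (IH (j - 1)).2
            rw [show ((j - 1 : ℕ) : ℤ) - (k : ℤ) = (j : ℤ) - k - 1 by omega] at hup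
            have hBj : Real.sqrt j ≤ B := by
              apply Real.sqrt_le_sqrt
              have : (j : ℤ) ≤ (k : ℤ) + M + 1 := by omega
              exact_mod_cast this
            calc Real.sqrt j * ((X ^ m) (Finsupp.single k 1)) (j - 1)
                = ((X ^ m) (Finsupp.single k 1)) (j - 1) * Real.sqrt j := mul_comm _ _
              _ ≤ ((pathCount m ((j : ℤ) - k - 1) : ℝ) * B ^ m) * B :=
                  mul_le_mul hup hBj (Real.sqrt_nonneg _) (by positivity)
              _ = (pathCount m ((j : ℤ) - k - 1) : ℝ) * (B ^ m * B) := by ring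
      · -- upper bound for up term
        by_cases hc : pathCount m ((j : ℤ) - k + 1) = 0
        · have hforce := (IH (j + 1)).2
          rw [show ((j + 1 : ℕ) : ℤ) - (k : ℤ) = (j : ℤ) - k + 1 by omega, hc] at hforce
          have h0 : ((X ^ m) (Finsupp.single k 1)) (j + 1) = 0 :=
            le_antisymm (by simpa using hforce) (Fpos _)
          rw [h0, mul_zero]
          positivity
        · have habs : ¬ ((m : ℤ) < |(j : ℤ) - k + 1|) := fun h => hc (pathCount_eq_zero _ _ h)
          rw [lt_abs, not_or] at habs
          obtain ⟨ha1, ha2⟩ := habs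
          rw [not_lt] at ha1 ha2
          have hup := (IH (j + 1)).2
          rw [show ((j + 1 : ℕ) : ℤ) - (k : ℤ) = (j : ℤ) - k + 1 by omega] at hup
          have hBj : Real.sqrt ((j : ℝ) + 1) ≤ B := by
            apply Real.sqrt_le_sqrt
            have : (j : ℤ) + 1 ≤ (k : ℤ) + M + 1 := by omega
            exact_mod_cast this
          calc Real.sqrt ((j : ℝ) + 1) * ((X ^ m) (Finsupp.single k 1)) (j + 1)
              = ((X ^ m) (Finsupp.single k 1)) (j + 1) * Real.sqrt ((j : ℝ) + 1) := mul_comm _ _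
            _ ≤ ((pathCount m ((j : ℤ) - k + 1) : ℝ) * B ^ m) * B :=
                mul_le_mul hup hBj (Real.sqrt_nonneg _) (by positivity)
            _ = (pathCount m ((j : ℤ) - k + 1) : ℝ) * (B ^ m * B) := by ring



lemma integral_sin_pow_sym (p : ℕ) :
    ∫ x in (-(Real.pi/2))..(Real.pi/2), Real.sin x ^ (2*p)
      = Real.pi * (2*p).choose p / 4 ^ p := by
  induction p with
  | zero => simp
  | succ p ih =>
    have h := integral_sin_pow (a := -(Real.pi/2)) (b := Real.pi/2) (2*p)
    rw [show 2*p + 2 = 2*(p+1) from by ring] at h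
    rw [h, ih]
    rw [Real.cos_pi_div_two, Real.cos_neg, Real.cos_pi_div_two]
    have hcb := Nat.succ_mul_centralBinom_succ p
    have hcb' : ((p:ℝ) + 1) * ((2*(p+1)).choose (p+1) : ℝ) = 2 * (2*p+1) * ((2*p).choose p : ℝ) := by
      rw [← Nat.centralBinom_eq_two_mul_choose, ← Nat.centralBinom_eq_two_mul_choose]
      exact_mod_cast hcb
    have h4 : (4:ℝ) ^ (p+1) = 4 * 4^p := by ring
    field_simp
    push_cast at hcb' ⊢
    linear_combination (-2 * Real.pi * 4 ^ p) * hcb'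

lemma integral_arcsine_odd {m : ℕ} (hm : Odd m) :
    ∫ x in (-Real.sqrt 2)..(Real.sqrt 2), x ^ m / (Real.pi * Real.sqrt (2 - x ^ 2)) = 0 := by
  set f : ℝ → ℝ := fun x => x ^ m / (Real.pi * Real.sqrt (2 - x ^ 2)) with hf
  have key : ∀ x, f (-x) = - f x := by
    intro x
    simp only [hf, hm.neg_pow, neg_sq, neg_div]
  have h := intervalIntegral.integral_comp_neg (a := -Real.sqrt 2) (b := Real.sqrt 2) f
  rw [neg_neg] at h
  have h2 : (∫ x in (-Real.sqrt 2)..(Real.sqrt 2), f (-x))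
      = - ∫ x in (-Real.sqrt 2)..(Real.sqrt 2), f x := by
    rw [show (fun x => f (-x)) = fun x => - f x from funext key]  -- maybe need simp_rw
    exact intervalIntegral.integral_neg
  rw [h2] at h
  linarith

lemma sqrt_two_pos : (0:ℝ) < Real.sqrt 2 := Real.sqrt_pos.mpr (by norm_num)

lemma image_sqrt2_sin :
    (fun θ : ℝ => Real.sqrt 2 * Real.sin θ) '' Set.Ioo (-(Real.pi/2)) (Real.pi/2)
      = Set.Ioo (-Real.sqrt 2) (Real.sqrt 2) := by
  ext x
  constructor
  · rintro ⟨θ, hθ, rfl⟩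
    dsimp only
    obtain ⟨h1, h2⟩ := hθ
    have hs1 : Real.sin θ < 1 := by
      calc Real.sin θ < Real.sin (Real.pi/2) :=
            Real.strictMonoOn_sin ⟨le_of_lt h1, le_of_lt h2⟩
              ⟨by linarith [Real.pi_pos], le_refl _⟩ h2
        _ = 1 := Real.sin_pi_div_two
    have hs2 : -1 < Real.sin θ := by
      calc (-1:ℝ) = Real.sin (-(Real.pi/2)) := by simp
        _ < Real.sin θ :=
            Real.strictMonoOn_sin ⟨le_refl _, by linarith [Real.pi_pos]⟩
              ⟨le_of_lt h1, le_of_lt h2⟩ h1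
    constructor
    · nlinarith [sqrt_two_pos]
    · nlinarith [sqrt_two_pos]
  · rintro ⟨h1, h2⟩
    refine ⟨Real.arcsin (x / Real.sqrt 2), ⟨?_, ?_⟩, ?_⟩
    · exact Real.neg_pi_div_two_lt_arcsin.mpr (by rw [lt_div_iff₀ sqrt_two_pos]; linarith)
    · exact Real.arcsin_lt_pi_div_two.mpr (by rw [div_lt_one sqrt_two_pos]; linarith)
    · show Real.sqrt 2 * Real.sin (Real.arcsin (x / Real.sqrt 2)) = x
      rw [Real.sin_arcsin (by rw [le_div_iff₀ sqrt_two_pos]; linarith)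
        (by rw [div_le_one sqrt_two_pos]; linarith)]
      field_simp

lemma integral_arcsine_even (p : ℕ) :
    ∫ x in (-Real.sqrt 2)..(Real.sqrt 2), x ^ (2*p) / (Real.pi * Real.sqrt (2 - x ^ 2))
      = ((2*p).choose p : ℝ) / 2 ^ p := by
  have hle : -Real.sqrt 2 ≤ Real.sqrt 2 := by linarith [sqrt_two_pos]
  rw [intervalIntegral.integral_of_le hle, MeasureTheory.integral_Ioc_eq_integral_Ioo,
    ← image_sqrt2_sin,
    MeasureTheory.integral_image_eq_integral_abs_deriv_smul measurableSet_Ioo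
      (fun x _ => ((Real.hasDerivAt_sin x).const_mul (Real.sqrt 2)).hasDerivWithinAt)
      (fun x hx y hy hxy => Real.injOn_sin
        (Set.Ioo_subset_Icc_self hx) (Set.Ioo_subset_Icc_self hy)
        (mul_left_cancel₀ (ne_of_gt sqrt_two_pos) hxy))]
  have hcongr : ∀ θ ∈ Set.Ioo (-(Real.pi/2)) (Real.pi/2),
      |Real.sqrt 2 * Real.cos θ| •
        ((Real.sqrt 2 * Real.sin θ) ^ (2*p) /
          (Real.pi * Real.sqrt (2 - (Real.sqrt 2 * Real.sin θ) ^ 2)))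
      = (2 ^ p / Real.pi) * Real.sin θ ^ (2*p) := by
    intro θ hθ
    have hcos : 0 < Real.cos θ := Real.cos_pos_of_mem_Ioo hθ
    have h2 : (Real.sqrt 2) ^ 2 = 2 := Real.sq_sqrt (by norm_num)
    have harg : 2 - (Real.sqrt 2 * Real.sin θ) ^ 2 = 2 * Real.cos θ ^ 2 := by
      rw [mul_pow, h2]
      nlinarith [Real.sin_sq_add_cos_sq θ]
    rw [harg]
    have hsq : Real.sqrt (2 * Real.cos θ ^ 2) = Real.sqrt 2 * Real.cos θ := by
      rw [Real.sqrt_mul (by norm_num), Real.sqrt_sq (le_of_lt hcos)]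
    rw [hsq, abs_of_pos (by positivity)]
    have hpow : (Real.sqrt 2 * Real.sin θ) ^ (2*p) = 2 ^ p * Real.sin θ ^ (2*p) := by
      rw [mul_pow, pow_mul, h2, pow_mul]
    rw [hpow, smul_eq_mul]
    have hne : Real.sqrt 2 * Real.cos θ ≠ 0 := by positivity
    field_simp
  rw [MeasureTheory.setIntegral_congr_fun measurableSet_Ioo hcongr,
    MeasureTheory.integral_const_mul, ← MeasureTheory.integral_Ioc_eq_integral_Ioo,
    ← intervalIntegral.integral_of_le (by linarith [Real.pi_pos] : -(Real.pi/2) ≤ Real.pi/2),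
    integral_sin_pow_sym]
  have h4 : (4:ℝ) ^ p = 2 ^ p * 2 ^ p := by rw [← mul_pow]; norm_num
  have hpi : Real.pi ≠ 0 := ne_of_gt Real.pi_pos
  field_simp [h4]
  ring_nf
  rw [h4]
  ring



lemma tendsto_ratio (a : ℝ) :
    Tendsto (fun k : ℕ => ((k : ℝ) + a) / (2 * (k : ℝ) + 1)) atTop (nhds (1/2)) := by
  have h1 : Tendsto (fun k : ℕ => 1 + a * (1 / (k : ℝ))) atTop (nhds 1) := by
    simpa using
      (tendsto_const_nhds (x := (1:ℝ))).add
        ((tendsto_const_nhds (x := a)).mul tendsto_one_div_atTop_nhds_zero_nat)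
  have h2 : Tendsto (fun k : ℕ => 2 + 1 / (k : ℝ)) atTop (nhds 2) := by
    simpa using
      (tendsto_const_nhds (x := (2:ℝ))).add tendsto_one_div_atTop_nhds_zero_nat
  have h3 := h1.div h2 (by norm_num)
  refine Tendsto.congr' ?_ h3
  filter_upwards [eventually_ge_atTop 1] with k hk
  have hk0 : (k : ℝ) ≠ 0 := Nat.cast_ne_zero.mpr (by omega)
  simp only [Pi.div_apply]
  field_simp

theorem harmonicOscillator_classical_limit_arcsine (m : ℕ) :
    Tendsto
      (fun k : ℕ =>
        ((jacobiOp (fun n => (n : ℝ) + 1) (fun _ => 0) ^ m) (Finsupp.single k 1)) k /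
          Real.sqrt (2 * (k : ℝ) + 1) ^ m)
      atTop
      (nhds (∫ x in (-Real.sqrt 2)..(Real.sqrt 2), x ^ m / (Real.pi * Real.sqrt (2 - x ^ 2)))) := by
  rcases Nat.even_or_odd m with he | ho
  · -- even case
    obtain ⟨p, rfl⟩ := he
    have hint : (∫ x in (-Real.sqrt 2)..(Real.sqrt 2),
          x ^ (p + p) / (Real.pi * Real.sqrt (2 - x ^ 2)))
        = ((2 * p).choose p : ℝ) / 2 ^ p := by
      rw [show p + p = 2 * p from (two_mul p).symm]
      exact integral_arcsine_even p
    rw [hint]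
    have hpc : pathCount (p + p) 0 = (2 * p).choose p := by
      have h := pathCount_choose (2 * p) p (by omega)
      rw [show 2 * (p : ℤ) - ((2 * p : ℕ) : ℤ) = 0 by push_cast; ring] at h
      rwa [show p + p = 2 * p from (two_mul p).symm]
    set C : ℝ := ((2 * p).choose p : ℝ) with hC
    have hlow : Tendsto
        (fun k : ℕ => C * (((k : ℝ) - ((p + p : ℕ) : ℝ)) / (2 * (k : ℝ) + 1)) ^ p)
        atTop (nhds (C / 2 ^ p)) := by
      have h := ((tendsto_ratio (-((p + p : ℕ) : ℝ))).pow p).const_mul C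
      simp only [← sub_eq_add_neg] at h
      have hval : C * ((1:ℝ)/2) ^ p = C / 2 ^ p := by
        rw [div_pow, one_pow, mul_one_div]
      rwa [hval] at h
    have hhigh : Tendsto
        (fun k : ℕ => C * (((k : ℝ) + (((p + p : ℕ) : ℝ) + 1)) / (2 * (k : ℝ) + 1)) ^ p)
        atTop (nhds (C / 2 ^ p)) := by
      have h := ((tendsto_ratio (((p + p : ℕ) : ℝ) + 1)).pow p).const_mul C
      have hval : C * ((1:ℝ)/2) ^ p = C / 2 ^ p := by
        rw [div_pow, one_pow, mul_one_div]
      rwa [hval] at h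
    refine tendsto_of_tendsto_of_tendsto_of_le_of_le' hlow hhigh ?_ ?_
    · filter_upwards [eventually_ge_atTop (p + p)] with k hk
      have hb := (jacobi_bound (p + p) k hk (p + p) le_rfl k).1
      have hkm : (0:ℝ) ≤ (k : ℝ) - ((p + p : ℕ) : ℝ) := by
        rw [sub_nonneg]; exact_mod_cast hk
      have hA : Real.sqrt ((k : ℝ) - ((p + p : ℕ) : ℝ)) ^ (p + p)
          = ((k : ℝ) - ((p + p : ℕ) : ℝ)) ^ p := by
        rw [pow_add, ← mul_pow, Real.mul_self_sqrt hkm]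
      have hD : Real.sqrt (2 * (k : ℝ) + 1) ^ (p + p) = (2 * (k : ℝ) + 1) ^ p := by
        rw [pow_add, ← mul_pow, Real.mul_self_sqrt (by positivity)]
      rw [sub_self, hpc, hA] at hb
      rw [hD, div_pow, ← mul_div_assoc]
      gcongr
    · filter_upwards [eventually_ge_atTop (p + p)] with k hk
      have hb := (jacobi_bound (p + p) k hk (p + p) le_rfl k).2
      have hB : Real.sqrt ((k : ℝ) + ((p + p : ℕ) : ℝ) + 1) ^ (p + p)
          = ((k : ℝ) + ((p + p : ℕ) : ℝ) + 1) ^ p := by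
        rw [pow_add, ← mul_pow, Real.mul_self_sqrt (by positivity)]
      have hD : Real.sqrt (2 * (k : ℝ) + 1) ^ (p + p) = (2 * (k : ℝ) + 1) ^ p := by
        rw [pow_add, ← mul_pow, Real.mul_self_sqrt (by positivity)]
      rw [sub_self, hpc, hB] at hb
      rw [hD, div_pow, ← mul_div_assoc]
      rw [show (k : ℝ) + (((p + p : ℕ) : ℝ) + 1) = (k : ℝ) + ((p + p : ℕ) : ℝ) + 1 by ring]
      gcongr
  · -- odd case
    rw [integral_arcsine_odd ho]
    refine Tendsto.congr' ?_ tendsto_const_nhds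
    filter_upwards [eventually_ge_atTop m] with k hk
    have hb := jacobi_bound m k hk m le_rfl k
    have hc0 : pathCount m ((k : ℤ) - k) = 0 := by
      rw [sub_self]
      exact pathCount_odd m 0 (by simpa using (Int.odd_coe_nat m).mpr ho)
    have h1 := hb.1
    have h2 := hb.2
    rw [hc0] at h1 h2
    push_cast at h1 h2
    rw [zero_mul] at h1 h2
    have hzero : ((jacobiOp (fun n => (n : ℝ) + 1) (fun _ => 0) ^ m) (Finsupp.single k 1)) k = 0 :=
      le_antisymm h2 h1
    rw [hzero, zero_div]
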